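/- Let D, E ∈ C^{m×n}. There exists a matrix A ∈ C^{n×m} that is left (D,E)-invertible if and only if rank(D) ≤ rank(E). -/

import Mathlib

open Matrix

theorem stmt10 (n m : ℕ) (D E : Matrix (Fin m) (Fin n) ℂ) :
    (∃ A : Matrix (Fin n) (Fin m) ℂ, ∃ C : Matrix (Fin m) (Fin n) ℂ,
      C * A * D = D ∧ LinearMap.ker E.mulVecLin ≤ LinearMap.ker C.mulVecLin) ↔
    D.rank ≤ E.rank := by
  constructor
  · rintro ⟨A, C, hCAD, hker⟩
    -- rank D ≤ rank C
    have h1 : D.rank ≤ C.rank := by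
      calc D.rank = (C * A * D).rank := by rw [hCAD]
        _ ≤ (C * A).rank := Matrix.rank_mul_le_left _ _
        _ ≤ C.rank := Matrix.rank_mul_le_left _ _
    -- rank C ≤ rank E via rank-nullity
    have h2 : C.rank ≤ E.rank := by
      have hC := LinearMap.finrank_range_add_finrank_ker C.mulVecLin
      have hE := LinearMap.finrank_range_add_finrank_ker E.mulVecLin
      have hk : Module.finrank ℂ (LinearMap.ker E.mulVecLin) ≤
          Module.finrank ℂ (LinearMap.ker C.mulVecLin) :=
        Submodule.finrank_mono hker
      simp only [Matrix.rank]
      omega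
    exact h1.trans h2
  · intro hrank
    set d := D.mulVecLin with hd
    set e := E.mulVecLin with he
    set K := LinearMap.ker e with hK
    -- quotient by ker e has dimension rank E
    have hq : Module.finrank ℂ ((Fin n → ℂ) ⧸ K) = E.rank := by
      have h1 := K.finrank_quotient_add_finrank
      have h2 := LinearMap.finrank_range_add_finrank_ker e
      have h3 : Module.finrank ℂ (Fin n → ℂ) = n := by simp
      have h4 : E.rank = Module.finrank ℂ (LinearMap.range e) := rfl
      have h5 : Module.finrank ℂ K = Module.finrank ℂ (LinearMap.ker e) := rfl
      omega
    have hrd : Module.finrank ℂ (LinearMap.range d) = D.rank := rfl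
    -- build surjection q from the quotient onto range d
    have hle : Module.finrank ℂ (LinearMap.range d) ≤
        Module.finrank ℂ ((Fin n → ℂ) ⧸ K) := by rw [hq, hrd]; exact hrank
    let bQ := Module.finBasis ℂ ((Fin n → ℂ) ⧸ K)
    let bR := Module.finBasis ℂ (LinearMap.range d)
    have hle' : Module.finrank ℂ (LinearMap.range d) ≤
        Module.finrank ℂ ((Fin n → ℂ) ⧸ K) := hle
    let q : ((Fin n → ℂ) ⧸ K) →ₗ[ℂ] LinearMap.range d :=
      bR.equivFun.symm.toLinearMap ∘ₗ
        (LinearMap.funLeft ℂ ℂ (Fin.castLE hle')) ∘ₗ bQ.equivFun.toLinearMap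
    have hqsurj : Function.Surjective q := by
      have h1 : Function.Surjective (LinearMap.funLeft ℂ ℂ (Fin.castLE hle')) :=
        LinearMap.funLeft_surjective_of_injective ℂ ℂ _ (Fin.castLE_injective hle')
      simp only [q, LinearMap.coe_comp, LinearEquiv.coe_coe]
      exact bR.equivFun.symm.surjective.comp (h1.comp bQ.equivFun.surjective)
    -- c : ℂ^n →ₗ ℂ^m
    let c : (Fin n → ℂ) →ₗ[ℂ] (Fin m → ℂ) :=
      (LinearMap.range d).subtype ∘ₗ q ∘ₗ K.mkQ
    have hkerc : LinearMap.ker e ≤ LinearMap.ker c := by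
      intro x hx
      simp only [LinearMap.mem_ker, c, LinearMap.comp_apply]
      have : K.mkQ x = 0 := (Submodule.Quotient.mk_eq_zero K).2 hx
      rw [this, map_zero, map_zero]
    -- section: for each v in range d, pick preimage under c
    have hsec : ∀ v : LinearMap.range d, ∃ x : Fin n → ℂ, c x = (v : Fin m → ℂ) := by
      intro v
      obtain ⟨y, hy⟩ := hqsurj v
      obtain ⟨x, hx⟩ := K.mkQ_surjective y
      exact ⟨x, by simp [c, hx, hy]⟩
    choose s hs using hsec
    -- turn the section into a linear map using a projection onto range d
    obtain ⟨P, hP⟩ := (LinearMap.range d).exists_isCompl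
    let π : (Fin m → ℂ) →ₗ[ℂ] LinearMap.range d :=
      (LinearMap.range d).projectionOnto P hP
    -- linear section of c over range d
    have hcq : ∀ v : LinearMap.range d, ∃ x, c x = (v : Fin m → ℂ) := fun v => ⟨s v, hs v⟩
    -- c restricted-corestricted: use rightInverse of surjective map onto range
    have hrange : LinearMap.range c = LinearMap.range d := by
      apply le_antisymm
      · rintro _ ⟨x, rfl⟩
        exact ((q (K.mkQ x)) : LinearMap.range d).2
      · rintro _ ⟨x, rfl⟩
        obtain ⟨y, hy⟩ := hcq ⟨d x, ⟨x, rfl⟩⟩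
        exact ⟨y, hy⟩
    let c' : (Fin n → ℂ) →ₗ[ℂ] LinearMap.range d :=
      c.codRestrict (LinearMap.range d) (fun x => hrange ▸ LinearMap.mem_range_self c x)
    have hc'surj : LinearMap.range c' = ⊤ := by
      rw [LinearMap.range_eq_top]
      intro v
      obtain ⟨y, hy⟩ := hcq v
      exact ⟨y, Subtype.ext (by simpa [c'] using hy)⟩
    obtain ⟨g, hg⟩ := c'.exists_rightInverse_of_surjective hc'surj
    -- define a := g ∘ π
    let a : (Fin m → ℂ) →ₗ[ℂ] (Fin n → ℂ) := g ∘ₗ π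
    have key : ∀ x, c (a (d x)) = d x := by
      intro x
      have hmem : d x ∈ LinearMap.range d := LinearMap.mem_range_self d x
      have hπ : π (d x) = ⟨d x, hmem⟩ := by
        simpa [π] using Submodule.linearProjOfIsCompl_apply_left hP ⟨d x, hmem⟩
      have hcg : c' (g ⟨d x, hmem⟩) = ⟨d x, hmem⟩ := by
        have := LinearMap.ext_iff.1 hg ⟨d x, hmem⟩
        simpa using this
      have : c (g ⟨d x, hmem⟩) = d x := congrArg Subtype.val hcg
      simp [a, hπ, this]
    refine ⟨LinearMap.toMatrix' a, LinearMap.toMatrix' c, ?_, ?_⟩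
    · have hmva : (LinearMap.toMatrix' a).mulVecLin = a := Matrix.toLin'_toMatrix' a
      have hmvc : (LinearMap.toMatrix' c).mulVecLin = c := Matrix.toLin'_toMatrix' c
      have : (LinearMap.toMatrix' c * LinearMap.toMatrix' a * D).mulVecLin = D.mulVecLin := by
        rw [Matrix.mulVecLin_mul, Matrix.mulVecLin_mul, hmva, hmvc]
        exact LinearMap.ext fun x => key x
      calc LinearMap.toMatrix' c * LinearMap.toMatrix' a * D
          = LinearMap.toMatrix' (LinearMap.toMatrix' c * LinearMap.toMatrix' a * D).mulVecLin := by
            rw [← Matrix.toLin'_apply', LinearMap.toMatrix'_toLin']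
        _ = LinearMap.toMatrix' D.mulVecLin := by rw [this]
        _ = D := by rw [← Matrix.toLin'_apply', LinearMap.toMatrix'_toLin']
    · have hmvc : (LinearMap.toMatrix' c).mulVecLin = c := Matrix.toLin'_toMatrix' c
      rw [hmvc]
      exact hkerc
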